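/- arXiv:2303.10547 — 3 statements merged into one kernel-verified Lean document; each statement's English description precedes it below -/
import Mathlib

section
/- Let γ ∈ (1/2, 1) and let a : [0,∞) → [0,∞) be a bounded, nonincreasing, measurable function such that lim_{t→∞} t^γ a(t) exists and equals some L > 0. Then for every μ > 0 and every p > 2, the function e^{-μ∫_0^t a(s)ds} is o(t^{-pγ/2}) as t → ∞; that is, lim_{t→∞} t^{pγ/2} · e^{-μ∫_0^t a(s)ds} = 0. -/
open MeasureTheory Filter Real

/-- Lemma 2, first claim: under Assumption 2, `e^(-μ ∫₀ᵗ a) = o(t^(-pγ/2))`. -/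
theorem exp_neg_integral_isLittleO
    (γ : ℝ) (hγ : γ ∈ Set.Ioo (1/2 : ℝ) 1)
    (a : ℝ → ℝ) (ha_nonneg : ∀ t ≥ (0:ℝ), 0 ≤ a t)
    (ha_bdd : ∃ M : ℝ, ∀ t ≥ (0:ℝ), a t ≤ M)
    (ha_mono : AntitoneOn a (Set.Ici (0:ℝ)))
    (ha_meas : Measurable a)
    (L : ℝ) (hL : 0 < L)
    (ha_lim : Tendsto (fun t : ℝ => t ^ γ * a t) atTop (nhds L))
    (μ : ℝ) (hμ : 0 < μ) (p : ℝ) (hp : 2 < p) :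
    Tendsto (fun t : ℝ =>
      t ^ (p * γ / 2) * Real.exp (-μ * ∫ s in (0:ℝ)..t, a s)) atTop (nhds 0) := by
  obtain ⟨hγ1, hγ2⟩ := hγ
  obtain ⟨M, hM⟩ := ha_bdd
  have h1γ : (0:ℝ) < 1 - γ := by linarith
  set q : ℝ := p * γ / 2 with hq
  -- eventually lower bound for a
  have hlb : ∀ᶠ t in atTop, L / 2 ≤ t ^ γ * a t :=
    ha_lim.eventually (eventually_ge_nhds (by linarith))
  obtain ⟨T₀, hT₀⟩ := (hlb.and (eventually_ge_atTop (1:ℝ))).exists_forall_of_atTop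
  set T : ℝ := max T₀ 1 with hTdef
  have hT1 : (1:ℝ) ≤ T := le_max_right _ _
  have hT0 : (0:ℝ) ≤ T := by linarith
  have hTlb : ∀ s : ℝ, T ≤ s → L / 2 * s ^ (-γ) ≤ a s := by
    intro s hs
    have hs1 : (1:ℝ) ≤ s := hT1.trans hs
    have hs0 : (0:ℝ) < s := by linarith
    have h := (hT₀ s ((le_max_left _ _).trans hs)).1
    have hsp : (0:ℝ) < s ^ γ := Real.rpow_pos_of_pos hs0 _
    rw [Real.rpow_neg hs0.le]
    calc L / 2 * (s ^ γ)⁻¹ ≤ (s ^ γ * a s) * (s ^ γ)⁻¹ :=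
          mul_le_mul_of_nonneg_right h (by positivity)
      _ = a s := by
          rw [mul_comm (s ^ γ) (a s), mul_assoc, mul_inv_cancel₀ hsp.ne', mul_one]
  -- integrability of a on intervals
  have hint : ∀ u v : ℝ, 0 ≤ u → u ≤ v → IntervalIntegrable a volume u v := by
    intro u v hu huv
    rw [intervalIntegrable_iff_integrableOn_Ioc_of_le huv]
    refine Integrable.mono' (g := fun _ => M) (integrableOn_const measure_Ioc_lt_top.ne)
      ha_meas.aestronglyMeasurable.restrict ?_
    filter_upwards [ae_restrict_mem measurableSet_Ioc] with s hs
    rw [Real.norm_eq_abs, abs_of_nonneg (ha_nonneg s (hu.trans hs.1.le))]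
    exact hM s (hu.trans hs.1.le)
  -- lower bound for the integral
  set K : ℝ := L / 2 / (1 - γ) with hK
  have hKpos : 0 < K := by positivity
  have hIlb : ∀ t : ℝ, T ≤ t → K * t ^ (1 - γ) - K * T ^ (1 - γ) ≤ ∫ s in (0:ℝ)..t, a s := by
    intro t ht
    have ht0 : (0:ℝ) ≤ t := hT0.trans ht
    have hsplit : (∫ s in (0:ℝ)..t, a s)
        = (∫ s in (0:ℝ)..T, a s) + ∫ s in T..t, a s :=
      (intervalIntegral.integral_add_adjacent_intervals (hint 0 T le_rfl hT0)
        (hint T t hT0 ht)).symm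
    have h0T : 0 ≤ ∫ s in (0:ℝ)..T, a s :=
      intervalIntegral.integral_nonneg hT0 (fun s hs => ha_nonneg s hs.1)
    have hrpow_int : IntervalIntegrable (fun s : ℝ => L / 2 * s ^ (-γ)) volume T t :=
      (intervalIntegral.intervalIntegrable_rpow' (by linarith)).const_mul _
    have hmono : (∫ s in T..t, L / 2 * s ^ (-γ)) ≤ ∫ s in T..t, a s := by
      apply intervalIntegral.integral_mono_on ht hrpow_int (hint T t hT0 ht)
      intro s hs
      exact hTlb s hs.1
    have hcalc : (∫ s in T..t, L / 2 * s ^ (-γ))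
        = K * t ^ (1 - γ) - K * T ^ (1 - γ) := by
      rw [intervalIntegral.integral_const_mul, integral_rpow (Or.inl (by linarith))]
      have : -γ + 1 = 1 - γ := by ring
      rw [this, hK]
      field_simp
    rw [hsplit]
    nlinarith [hmono, hcalc]
  -- the dominating function tends to 0
  set b : ℝ := μ * K with hb
  have hbpos : 0 < b := by positivity
  have hg : Tendsto (fun t : ℝ => t ^ q * Real.exp (-b * t ^ (1 - γ))) atTop (nhds 0) := by
    have hcomp := (tendsto_rpow_mul_exp_neg_mul_atTop_nhds_zero (q / (1 - γ)) b hbpos).comp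
      (tendsto_rpow_atTop h1γ)
    refine hcomp.congr' ?_
    filter_upwards [eventually_ge_atTop (0:ℝ)] with t ht
    simp only [Function.comp]
    rw [← Real.rpow_mul ht]
    have hcanc : (1 - γ) * (q / (1 - γ)) = q := by field_simp
    rw [hcanc]
  -- squeeze
  set C : ℝ := Real.exp (μ * (K * T ^ (1 - γ))) with hC
  have hCg : Tendsto (fun t : ℝ => C * (t ^ q * Real.exp (-b * t ^ (1 - γ)))) atTop (nhds 0) := by
    simpa using hg.const_mul C
  refine squeeze_zero' ?_ ?_ hCg
  · filter_upwards [eventually_ge_atTop (0:ℝ)] with t ht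
    positivity
  · filter_upwards [eventually_ge_atTop T] with t ht
    have ht0 : (0:ℝ) ≤ t := hT0.trans ht
    have hI := hIlb t ht
    have hexp : Real.exp (-μ * ∫ s in (0:ℝ)..t, a s)
        ≤ C * Real.exp (-b * t ^ (1 - γ)) := by
      rw [hC, ← Real.exp_add]
      apply Real.exp_le_exp.2
      rw [hb]
      nlinarith [hI, hμ]
    calc t ^ q * Real.exp (-μ * ∫ s in (0:ℝ)..t, a s)
        ≤ t ^ q * (C * Real.exp (-b * t ^ (1 - γ))) :=
          mul_le_mul_of_nonneg_left hexp (Real.rpow_nonneg ht0 _)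
      _ = C * (t ^ q * Real.exp (-b * t ^ (1 - γ))) := by ring
end

section
/- Let γ ∈ (1/2, 1) and let a : [0,∞) → [0,∞) be a bounded, nonincreasing, measurable function such that lim_{t→∞} t^γ a(t) exists and equals some L > 0. Then for every μ > 0 and every p > 2, lim_{t→∞} t^{pγ/2} · ∫_0^t a(s)^{(p+2)/2} · e^{-μ∫_s^t a(r)dr} ds = L^{p/2} / μ. -/
open MeasureTheory Filter Real

open Set intervalIntegral
open scoped Topology

namespace LimW

variable {b : ℝ → ℝ}

lemma anti_rpow (hb : Antitone b) (hb0 : ∀ s, 0 ≤ b s) {q : ℝ} (hq : 0 ≤ q) :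
    Antitone (fun s => b s ^ q) := fun _ _ h => Real.rpow_le_rpow (hb0 _) (hb h) hq

lemma cont_primitive (hb : Antitone b) (x : ℝ) :
    Continuous (fun u => ∫ r in x..u, b r) :=
  intervalIntegral.continuous_primitive (fun _ _ => hb.intervalIntegrable) x

lemma cont_exp_inner (hb : Antitone b) (μ t : ℝ) :
    Continuous fun s => Real.exp (-μ * ∫ r in s..t, b r) := by
  have h1 : Continuous fun s => -(∫ r in t..s, b r) := (cont_primitive hb t).neg
  have h2 : (fun s => ∫ r in s..t, b r) = fun s => -(∫ r in t..s, b r) := by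
    funext s; exact intervalIntegral.integral_symm t s
  exact Real.continuous_exp.comp ((continuous_const (y := -μ)).mul (h2 ▸ h1))

lemma ftc_exp (hb : Antitone b) {μ : ℝ} (hμ : 0 < μ)
    {x t : ℝ} (hxt : x ≤ t) :
    (∫ s in x..t, b s * Real.exp (-μ * ∫ r in s..t, b r))
      = (1 - Real.exp (-μ * ∫ r in x..t, b r)) / μ := by
  set B : ℝ → ℝ := fun u => ∫ r in x..u, b r with hBdef
  have hBcont : Continuous B := cont_primitive hb x
  have hsub : ∀ s, (∫ r in s..t, b r) = B t - B s := by
    intro s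
    exact (intervalIntegral.integral_interval_sub_left hb.intervalIntegrable
      hb.intervalIntegrable).symm
  have hgcont : Continuous (fun u => Real.exp (-μ * (B t - B u)) / μ) :=
    (Real.continuous_exp.comp ((continuous_const (y := -μ)).mul
      (continuous_const.sub hBcont))).div_const μ
  have hBd : ∀ u, HasDerivWithinAt B (Function.rightLim b u) (Set.Ici u) u := by
    intro u
    exact intervalIntegral.integral_hasDerivWithinAt_of_tendsto_ae_right
      hb.intervalIntegrable
      ((hb.measurable.stronglyMeasurable).stronglyMeasurableAtFilter)
      ((hb.tendsto_rightLim u).mono_left inf_le_left)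
  have hgd : ∀ u, HasDerivWithinAt (fun u => Real.exp (-μ * (B t - B u)) / μ)
      (Function.rightLim b u * Real.exp (-μ * (B t - B u))) (Set.Ici u) u := by
    intro u
    have h1 : HasDerivWithinAt (fun y => -μ * (B t - B y)) (μ * Function.rightLim b u)
        (Set.Ici u) u := by
      have := ((hBd u).const_sub (B t)).const_mul (-μ)
      exact this.congr_deriv (by ring)
    have h2 := (h1.exp).div_const μ
    exact h2.congr_deriv (by field_simp)
  have hg'int : IntervalIntegrable (fun u => Function.rightLim b u *
      Real.exp (-μ * (B t - B u))) volume x t := by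
    have h1 : IntervalIntegrable (fun u => Function.rightLim b u) volume x t :=
      hb.rightLim.intervalIntegrable
    exact h1.mul_continuousOn
      ((Real.continuous_exp.comp ((continuous_const (y := -μ)).mul
        (continuous_const.sub hBcont))).continuousOn)
  have heq : (∫ u in x..t, Function.rightLim b u * Real.exp (-μ * (B t - B u)))
      = Real.exp (-μ * (B t - B t)) / μ - Real.exp (-μ * (B t - B x)) / μ :=
    intervalIntegral.integral_eq_sub_of_hasDeriv_right_of_le hxt hgcont.continuousOn
      (fun u _ => (hgd u).mono Set.Ioi_subset_Ici_self) hg'int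
  have hae : (∫ s in x..t, b s * Real.exp (-μ * ∫ r in s..t, b r))
      = ∫ u in x..t, Function.rightLim b u * Real.exp (-μ * (B t - B u)) := by
    apply intervalIntegral.integral_congr_ae
    have hnull : volume {u : ℝ | ¬ContinuousAt b u} = 0 :=
      (hb.countable_not_continuousAt).measure_zero _
    have hane : ∀ᵐ u : ℝ, u ∉ {u : ℝ | ¬ContinuousAt b u} :=
      measure_eq_zero_iff_ae_notMem.mp hnull
    filter_upwards [hane] with u hu _
    have hc : ContinuousAt b u := not_not.mp hu
    have hr : Function.rightLim b u = b u :=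
      rightLim_eq_of_tendsto
        (hc.tendsto.mono_left nhdsWithin_le_nhds)
    rw [hsub u, hr, mul_comm]
  have hBx : B x = 0 := intervalIntegral.integral_same
  have hBt : (∫ r in x..t, b r) = B t := rfl
  rw [hae, heq, hBx, hBt, sub_self, sub_zero, mul_zero, Real.exp_zero, sub_div, one_div]

end LimW

set_option maxHeartbeats 1000000 in
/-- Lemma 2, second claim: under Assumption 2,
`lim_{t→∞} t^(pγ/2) ∫₀ᵗ a(s)^((p+2)/2) e^(-μ ∫ₛᵗ a) ds = L^(p/2)/μ`. -/
theorem lim_weighted_integral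
    (γ : ℝ) (hγ : γ ∈ Set.Ioo (1/2 : ℝ) 1)
    (a : ℝ → ℝ) (ha_nonneg : ∀ t ≥ (0:ℝ), 0 ≤ a t)
    (ha_bdd : ∃ M : ℝ, ∀ t ≥ (0:ℝ), a t ≤ M)
    (ha_mono : AntitoneOn a (Set.Ici (0:ℝ)))
    (ha_meas : Measurable a)
    (L : ℝ) (hL : 0 < L)
    (ha_lim : Tendsto (fun t : ℝ => t ^ γ * a t) atTop (nhds L))
    (μ : ℝ) (hμ : 0 < μ) (p : ℝ) (hp : 2 < p) :
    Tendsto (fun t : ℝ =>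
      t ^ (p * γ / 2) *
        ∫ s in (0:ℝ)..t, (a s) ^ ((p + 2) / 2) * Real.exp (-μ * ∫ r in s..t, a r))
      atTop (nhds (L ^ (p / 2) / μ)) := by
  obtain ⟨hγ1, hγ2⟩ := hγ
  obtain ⟨M₀, hM₀⟩ := ha_bdd
  set M : ℝ := max M₀ 1 with hMdef
  have hM1 : (1:ℝ) ≤ M := le_max_right _ _
  have hM0 : (0:ℝ) < M := lt_of_lt_of_le one_pos hM1
  set b : ℝ → ℝ := fun s => a (max s 0) with hbdef
  have hb : Antitone b := fun s s' h =>
    ha_mono (Set.mem_Ici.2 (le_max_right _ _)) (Set.mem_Ici.2 (le_max_right _ _))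
      (max_le_max h le_rfl)
  have hb0 : ∀ s, 0 ≤ b s := fun s => ha_nonneg _ (le_max_right _ _)
  have hbM : ∀ s, b s ≤ M := fun s => le_trans (hM₀ _ (le_max_right _ _)) (le_max_left _ _)
  have hblim : Tendsto (fun t : ℝ => t ^ γ * b t) atTop (nhds L) := by
    apply ha_lim.congr'
    filter_upwards [eventually_ge_atTop (0:ℝ)] with t ht
    simp [hbdef, max_eq_left ht]
  set e2 : ℝ := p / 2 with he2
  set q : ℝ := (p + 2) / 2 with hq
  set k : ℝ := p * γ / 2 with hk
  have hp0 : (0:ℝ) < p := by linarith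
  have he2pos : 0 < e2 := by rw [he2]; linarith
  have hγ0 : (0:ℝ) < γ := by linarith
  have hkpos : 0 < k := by rw [hk]; positivity
  have hq0 : (0:ℝ) ≤ q := by rw [hq]; linarith
  have hqe2 : q = e2 + 1 := by rw [hq, he2]; ring
  have hke2 : k = γ * e2 := by rw [hk, he2]; ring
  -- integrability facts
  have hIb : ∀ x y t : ℝ, IntervalIntegrable
      (fun s => b s ^ q * Real.exp (-μ * ∫ r in s..t, b r)) volume x y :=
    fun x y t => ((LimW.anti_rpow hb hb0 hq0).intervalIntegrable).mul_continuousOn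
      (LimW.cont_exp_inner hb μ t).continuousOn
  have hIb1 : ∀ C x y t : ℝ, IntervalIntegrable
      (fun s => C * (b s * Real.exp (-μ * ∫ r in s..t, b r))) volume x y := by
    intro C x y t
    exact (hb.intervalIntegrable.mul_continuousOn
      (LimW.cont_exp_inner hb μ t).continuousOn).const_mul C
  -- reduce to `b`
  suffices h : Tendsto (fun t : ℝ =>
      t ^ k * ∫ s in (0:ℝ)..t, b s ^ q * Real.exp (-μ * ∫ r in s..t, b r))
      atTop (nhds (L ^ e2 / μ)) by
    apply h.congr'
    filter_upwards [eventually_ge_atTop (0:ℝ)] with t ht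
    congr 1
    apply intervalIntegral.integral_congr
    intro s hs
    rw [Set.uIcc_of_le ht] at hs
    have h1 : b s = a s := by simp [hbdef, max_eq_left hs.1]
    have h2 : (∫ r in s..t, b r) = ∫ r in s..t, a r := by
      apply intervalIntegral.integral_congr
      intro r hr
      rw [Set.uIcc_of_le hs.2] at hr
      simp [hbdef, max_eq_left (le_trans hs.1 hr.1)]
    simp only [h1, h2]
  -- general limit lemma
  have hlim2 : ∀ δ : ℝ, 0 < δ →
      Tendsto (fun t : ℝ => t ^ k * b (δ * t) ^ e2) atTop
        (nhds (δ ^ (-k) * L ^ e2)) := by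
    intro δ hδ
    have h1 : Tendsto (fun t : ℝ => (δ * t) ^ γ * b (δ * t)) atTop (nhds L) :=
      hblim.comp (tendsto_id.const_mul_atTop hδ)
    have h2 : Tendsto (fun t : ℝ => δ ^ (-γ) * ((δ * t) ^ γ * b (δ * t))) atTop
        (nhds (δ ^ (-γ) * L)) := h1.const_mul _
    have h3 : Tendsto (fun t : ℝ => t ^ γ * b (δ * t)) atTop (nhds (δ ^ (-γ) * L)) := by
      apply h2.congr'
      filter_upwards [eventually_gt_atTop (0:ℝ)] with t ht
      have hne : (δ:ℝ) ^ γ ≠ 0 := (Real.rpow_pos_of_pos hδ γ).ne'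
      rw [Real.mul_rpow hδ.le ht.le, Real.rpow_neg hδ.le]
      field_simp
    have h4 : Tendsto (fun t : ℝ => (t ^ γ * b (δ * t)) ^ e2) atTop
        (nhds ((δ ^ (-γ) * L) ^ e2)) :=
      ((Real.continuousAt_rpow_const _ _ (Or.inr he2pos.le)).tendsto).comp h3
    have h5 : (δ ^ (-γ) * L) ^ e2 = δ ^ (-k) * L ^ e2 := by
      rw [Real.mul_rpow (Real.rpow_nonneg hδ.le _) hL.le, ← Real.rpow_mul hδ.le]
      congr 2
      rw [hke2]; ring
    rw [h5] at h4
    apply h4.congr'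
    filter_upwards [eventually_ge_atTop (0:ℝ)] with t ht
    rw [Real.mul_rpow (Real.rpow_nonneg ht _) (hb0 _), ← Real.rpow_mul ht, ← hke2]
  -- lower bound on the inner integral over [δt, t]
  have hA : ∀ δ : ℝ, δ ∈ Set.Ioo (0:ℝ) 1 → ∃ c : ℝ, 0 < c ∧
      ∀ᶠ t : ℝ in atTop, c * t ^ (1 - γ) ≤ ∫ r in (δ * t)..t, b r := by
    intro δ hδ
    have hev : ∀ᶠ s : ℝ in atTop, L / 2 ≤ s ^ γ * b s :=
      (hblim.eventually (eventually_gt_nhds (by linarith : L / 2 < L))).mono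
        fun s hs => hs.le
    obtain ⟨T₀, hT⟩ := eventually_atTop.mp hev
    set T := max T₀ 1 with hTdef
    have hT1 : (1:ℝ) ≤ T := le_max_right _ _
    have hbT : ∀ s, T ≤ s → L / 2 * s ^ (-γ) ≤ b s := by
      intro s hs
      have hs0 : (0:ℝ) < s := by linarith
      have h1 := hT s (le_trans (le_max_left _ _) hs)
      have h2 : (0:ℝ) < s ^ γ := Real.rpow_pos_of_pos hs0 _
      rw [Real.rpow_neg hs0.le, mul_inv_le_iff₀' h2]
      exact h1
    have h1γ : (0:ℝ) < 1 - γ := by linarith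
    have hδ1 : δ ^ (1 - γ) < 1 := Real.rpow_lt_one hδ.1.le hδ.2 h1γ
    refine ⟨L / 2 * (1 - δ ^ (1 - γ)) / (1 - γ),
      div_pos (mul_pos (by linarith) (by linarith)) h1γ, ?_⟩
    filter_upwards [eventually_ge_atTop (T / δ), eventually_ge_atTop (1:ℝ)] with t ht ht1
    have ht0 : (0:ℝ) < t := by linarith
    have hδt : T ≤ δ * t := by
      rw [div_le_iff₀ hδ.1] at ht
      nlinarith
    have hδt0 : (0:ℝ) < δ * t := lt_of_lt_of_le (by linarith) hδt
    have hδtt : δ * t ≤ t := by nlinarith [hδ.2]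
    have hmono : (∫ r in (δ * t)..t, L / 2 * r ^ (-γ)) ≤ ∫ r in (δ * t)..t, b r := by
      apply intervalIntegral.integral_mono_on hδtt ?_ hb.intervalIntegrable
      · intro s hs
        exact hbT s (le_trans hδt hs.1)
      · apply ContinuousOn.intervalIntegrable
        apply ContinuousOn.mul continuousOn_const
        intro r hr
        rw [Set.uIcc_of_le hδtt] at hr
        exact (Real.continuousAt_rpow_const r (-γ)
          (Or.inl (ne_of_gt (lt_of_lt_of_le hδt0 hr.1)))).continuousWithinAt
    have hcomp : (∫ r in (δ * t)..t, L / 2 * r ^ (-γ))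
        = L / 2 * ((t ^ (-γ + 1) - (δ * t) ^ (-γ + 1)) / (-γ + 1)) := by
      rw [intervalIntegral.integral_const_mul,
        integral_rpow (Or.inl (by linarith : (-1:ℝ) < -γ))]
    have hrw : (δ * t) ^ (-γ + 1) = δ ^ (-γ + 1) * t ^ (-γ + 1) :=
      Real.mul_rpow hδ.1.le ht0.le
    have heq1 : (-γ + 1 : ℝ) = 1 - γ := by ring
    calc L / 2 * (1 - δ ^ (1 - γ)) / (1 - γ) * t ^ (1 - γ)
        = L / 2 * ((t ^ (-γ + 1) - (δ * t) ^ (-γ + 1)) / (-γ + 1)) := by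
          rw [hrw, heq1]
          field_simp
      _ ≤ ∫ r in (δ * t)..t, b r := hcomp ▸ hmono
  -- decay lemmas
  have hdecay : ∀ δ : ℝ, δ ∈ Set.Ioo (0:ℝ) 1 →
      Tendsto (fun t : ℝ => t ^ (k + 1) *
          Real.exp (-μ * ∫ r in (δ * t)..t, b r)) atTop (nhds 0)
      ∧ Tendsto (fun t : ℝ => Real.exp (-μ * ∫ r in (δ * t)..t, b r)) atTop (nhds 0) := by
    intro δ hδ
    obtain ⟨c, hc, hev⟩ := hA δ hδ
    have hμc : 0 < μ * c := mul_pos hμ hc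
    have h1γ : (0:ℝ) < 1 - γ := by linarith
    have hexp : ∀ᶠ t : ℝ in atTop,
        Real.exp (-μ * ∫ r in (δ * t)..t, b r) ≤ Real.exp (-(μ * c) * t ^ (1 - γ)) := by
      filter_upwards [hev] with t htev
      apply Real.exp_le_exp.2
      nlinarith [htev, hμ.le]
    constructor
    · apply squeeze_zero' (g := fun t : ℝ => t ^ (k + 1) * Real.exp (-(μ * c) * t ^ (1 - γ)))
      · filter_upwards [eventually_ge_atTop (0:ℝ)] with t ht
        positivity
      · filter_upwards [hexp, eventually_ge_atTop (0:ℝ)] with t htev ht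
        exact mul_le_mul_of_nonneg_left htev (Real.rpow_nonneg ht _)
      · have hm : Tendsto (fun u : ℝ => u ^ ((k + 1) / (1 - γ)) * Real.exp (-(μ * c) * u))
            atTop (nhds 0) :=
          tendsto_rpow_mul_exp_neg_mul_atTop_nhds_zero _ _ hμc
        have hcomp := hm.comp (tendsto_rpow_atTop h1γ)
        apply hcomp.congr'
        filter_upwards [eventually_ge_atTop (0:ℝ)] with t ht
        simp only [Function.comp]
        rw [← Real.rpow_mul ht]
        congr 2
        field_simp
    · apply squeeze_zero' (g := fun t : ℝ => Real.exp (-(μ * c) * t ^ (1 - γ)))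
      · exact Eventually.of_forall fun t => (Real.exp_pos _).le
      · exact hexp
      · have : Tendsto (fun t : ℝ => (μ * c) * t ^ (1 - γ)) atTop atTop :=
          (tendsto_rpow_atTop h1γ).const_mul_atTop hμc
        have h2 := Real.tendsto_exp_neg_atTop_nhds_zero.comp this
        apply h2.congr
        intro t
        simp [Function.comp, neg_mul]
  -- lower estimate
  have h_low : ∀ δ : ℝ, δ ∈ Set.Ioo (0:ℝ) 1 → ∀ᶠ t : ℝ in atTop,
      (t ^ k * b t ^ e2) * ((1 - Real.exp (-μ * ∫ r in (δ * t)..t, b r)) / μ)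
        ≤ t ^ k * ∫ s in (0:ℝ)..t, b s ^ q * Real.exp (-μ * ∫ r in s..t, b r) := by
    intro δ hδ
    filter_upwards [eventually_gt_atTop (0:ℝ)] with t ht
    have hδt0 : (0:ℝ) ≤ δ * t := le_of_lt (mul_pos hδ.1 ht)
    have hδtt : δ * t ≤ t := by nlinarith [hδ.2]
    have hsplit : (∫ s in (0:ℝ)..t, b s ^ q * Real.exp (-μ * ∫ r in s..t, b r))
        = (∫ s in (0:ℝ)..(δ * t), b s ^ q * Real.exp (-μ * ∫ r in s..t, b r))
          + ∫ s in (δ * t)..t, b s ^ q * Real.exp (-μ * ∫ r in s..t, b r) :=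
      (intervalIntegral.integral_add_adjacent_intervals (hIb _ _ _) (hIb _ _ _)).symm
    have h1 : (0:ℝ) ≤ ∫ s in (0:ℝ)..(δ * t), b s ^ q * Real.exp (-μ * ∫ r in s..t, b r) := by
      apply intervalIntegral.integral_nonneg hδt0
      intro s _
      exact mul_nonneg (Real.rpow_nonneg (hb0 s) _) (Real.exp_pos _).le
    have h3 : (∫ s in (δ * t)..t, b t ^ e2 * (b s * Real.exp (-μ * ∫ r in s..t, b r)))
        ≤ ∫ s in (δ * t)..t, b s ^ q * Real.exp (-μ * ∫ r in s..t, b r) := by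
      apply intervalIntegral.integral_mono_on hδtt (hIb1 _ _ _ _) (hIb _ _ _)
      intro s hs
      have key : b t ^ e2 ≤ b s ^ e2 := Real.rpow_le_rpow (hb0 t) (hb hs.2) he2pos.le
      have hrw : b s ^ e2 * b s = b s ^ q := by
        rw [hqe2, Real.rpow_add' (hb0 s) (ne_of_gt (by linarith)), Real.rpow_one]
      calc b t ^ e2 * (b s * Real.exp (-μ * ∫ r in s..t, b r))
          ≤ b s ^ e2 * (b s * Real.exp (-μ * ∫ r in s..t, b r)) := by
            exact mul_le_mul_of_nonneg_right key
              (mul_nonneg (hb0 s) (Real.exp_pos _).le)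
        _ = b s ^ q * Real.exp (-μ * ∫ r in s..t, b r) := by rw [← mul_assoc, hrw]
    rw [intervalIntegral.integral_const_mul, LimW.ftc_exp hb hμ hδtt] at h3
    have h4 : b t ^ e2 * ((1 - Real.exp (-μ * ∫ r in (δ * t)..t, b r)) / μ)
        ≤ ∫ s in (0:ℝ)..t, b s ^ q * Real.exp (-μ * ∫ r in s..t, b r) := by
      rw [hsplit]; linarith
    calc (t ^ k * b t ^ e2) * ((1 - Real.exp (-μ * ∫ r in (δ * t)..t, b r)) / μ)
        = t ^ k * (b t ^ e2 * ((1 - Real.exp (-μ * ∫ r in (δ * t)..t, b r)) / μ)) := by ring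
      _ ≤ t ^ k * ∫ s in (0:ℝ)..t, b s ^ q * Real.exp (-μ * ∫ r in s..t, b r) := by
          apply mul_le_mul_of_nonneg_left h4 (Real.rpow_nonneg ht.le _)
  -- upper estimate
  have h_up : ∀ δ : ℝ, δ ∈ Set.Ioo (0:ℝ) 1 → ∀ᶠ t : ℝ in atTop,
      t ^ k * (∫ s in (0:ℝ)..t, b s ^ q * Real.exp (-μ * ∫ r in s..t, b r))
        ≤ (M ^ q * δ) * (t ^ (k + 1) * Real.exp (-μ * ∫ r in (δ * t)..t, b r))
          + (t ^ k * b (δ * t) ^ e2) / μ := by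
    intro δ hδ
    filter_upwards [eventually_gt_atTop (0:ℝ)] with t ht
    have hδt0 : (0:ℝ) ≤ δ * t := le_of_lt (mul_pos hδ.1 ht)
    have hδtt : δ * t ≤ t := by nlinarith [hδ.2]
    have hsplit : (∫ s in (0:ℝ)..t, b s ^ q * Real.exp (-μ * ∫ r in s..t, b r))
        = (∫ s in (0:ℝ)..(δ * t), b s ^ q * Real.exp (-μ * ∫ r in s..t, b r))
          + ∫ s in (δ * t)..t, b s ^ q * Real.exp (-μ * ∫ r in s..t, b r) :=
      (intervalIntegral.integral_add_adjacent_intervals (hIb _ _ _) (hIb _ _ _)).symm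
    have htail : (∫ s in (0:ℝ)..(δ * t), b s ^ q * Real.exp (-μ * ∫ r in s..t, b r))
        ≤ (δ * t) * (M ^ q * Real.exp (-μ * ∫ r in (δ * t)..t, b r)) := by
      have hptw : ∀ s ∈ Set.Icc (0:ℝ) (δ * t),
          b s ^ q * Real.exp (-μ * ∫ r in s..t, b r)
            ≤ M ^ q * Real.exp (-μ * ∫ r in (δ * t)..t, b r) := by
        intro s hs
        have hbq : b s ^ q ≤ M ^ q := Real.rpow_le_rpow (hb0 s) (hbM s) hq0
        have hsum : (∫ r in s..t, b r)
            = (∫ r in s..(δ * t), b r) + ∫ r in (δ * t)..t, b r :=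
          (intervalIntegral.integral_add_adjacent_intervals hb.intervalIntegrable
            hb.intervalIntegrable).symm
        have hpos : (0:ℝ) ≤ ∫ r in s..(δ * t), b r :=
          intervalIntegral.integral_nonneg hs.2 fun r _ => hb0 r
        have hexp : Real.exp (-μ * ∫ r in s..t, b r)
            ≤ Real.exp (-μ * ∫ r in (δ * t)..t, b r) := by
          apply Real.exp_le_exp.2
          nlinarith [hμ.le]
        apply mul_le_mul hbq hexp (Real.exp_pos _).le (by positivity)
      have hmono := intervalIntegral.integral_mono_on hδt0 (hIb 0 (δ * t) t)
        (_root_.intervalIntegrable_const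
          (c := M ^ q * Real.exp (-μ * ∫ r in (δ * t)..t, b r))) hptw
      rw [intervalIntegral.integral_const, smul_eq_mul, sub_zero] at hmono
      exact hmono
    have hmain : (∫ s in (δ * t)..t, b s ^ q * Real.exp (-μ * ∫ r in s..t, b r))
        ≤ b (δ * t) ^ e2 * ((1 - Real.exp (-μ * ∫ r in (δ * t)..t, b r)) / μ) := by
      have h3 : (∫ s in (δ * t)..t, b s ^ q * Real.exp (-μ * ∫ r in s..t, b r))
          ≤ ∫ s in (δ * t)..t, b (δ * t) ^ e2 * (b s * Real.exp (-μ * ∫ r in s..t, b r)) := by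
        apply intervalIntegral.integral_mono_on hδtt (hIb _ _ _) (hIb1 _ _ _ _)
        intro s hs
        have key : b s ^ e2 ≤ b (δ * t) ^ e2 :=
          Real.rpow_le_rpow (hb0 s) (hb hs.1) he2pos.le
        have hrw : b s ^ e2 * b s = b s ^ q := by
          rw [hqe2, Real.rpow_add' (hb0 s) (ne_of_gt (by linarith)), Real.rpow_one]
        calc b s ^ q * Real.exp (-μ * ∫ r in s..t, b r)
            = b s ^ e2 * (b s * Real.exp (-μ * ∫ r in s..t, b r)) := by rw [← mul_assoc, hrw]
          _ ≤ b (δ * t) ^ e2 * (b s * Real.exp (-μ * ∫ r in s..t, b r)) := by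
              exact mul_le_mul_of_nonneg_right key
                (mul_nonneg (hb0 s) (Real.exp_pos _).le)
      rw [intervalIntegral.integral_const_mul, LimW.ftc_exp hb hμ hδtt] at h3
      exact h3
    have hmain2 : b (δ * t) ^ e2 * ((1 - Real.exp (-μ * ∫ r in (δ * t)..t, b r)) / μ)
        ≤ b (δ * t) ^ e2 / μ := by
      have h1 : (1 - Real.exp (-μ * ∫ r in (δ * t)..t, b r)) / μ ≤ 1 / μ := by
        gcongr
        nlinarith [Real.exp_pos (-μ * ∫ r in (δ * t)..t, b r)]
      calc b (δ * t) ^ e2 * ((1 - Real.exp (-μ * ∫ r in (δ * t)..t, b r)) / μ)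
          ≤ b (δ * t) ^ e2 * (1 / μ) :=
            mul_le_mul_of_nonneg_left h1 (Real.rpow_nonneg (hb0 _) _)
        _ = b (δ * t) ^ e2 / μ := by ring
    have htk1 : t ^ (k + 1) = t ^ k * t := Real.rpow_add_one (ne_of_gt ht) k
    have hfinal : (∫ s in (0:ℝ)..t, b s ^ q * Real.exp (-μ * ∫ r in s..t, b r))
        ≤ (δ * t) * (M ^ q * Real.exp (-μ * ∫ r in (δ * t)..t, b r))
          + b (δ * t) ^ e2 / μ := by
      rw [hsplit]; linarith
    calc t ^ k * (∫ s in (0:ℝ)..t, b s ^ q * Real.exp (-μ * ∫ r in s..t, b r))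
        ≤ t ^ k * ((δ * t) * (M ^ q * Real.exp (-μ * ∫ r in (δ * t)..t, b r))
            + b (δ * t) ^ e2 / μ) :=
          mul_le_mul_of_nonneg_left hfinal (Real.rpow_nonneg ht.le _)
      _ = (M ^ q * δ) * (t ^ (k + 1) * Real.exp (-μ * ∫ r in (δ * t)..t, b r))
          + (t ^ k * b (δ * t) ^ e2) / μ := by rw [htk1]; ring
  -- conclusion via order-tendsto
  rw [tendsto_order]
  constructor
  · intro c hc
    have hhalf : (1/2 : ℝ) ∈ Set.Ioo (0:ℝ) 1 := by norm_num
    have h1 : Tendsto (fun t : ℝ => t ^ k * b t ^ e2) atTop (nhds (L ^ e2)) := by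
      have := hlim2 1 one_pos
      simp only [one_mul, Real.one_rpow] at this
      exact this
    have h2 := (hdecay (1/2) hhalf).2
    have h3 : Tendsto (fun t : ℝ =>
        (1 - Real.exp (-μ * ∫ r in ((1:ℝ)/2 * t)..t, b r)) / μ) atTop (nhds ((1 - 0) / μ)) :=
      (tendsto_const_nhds.sub h2).div_const μ
    have hG := h1.mul h3
    have hval : L ^ e2 * ((1 - 0) / μ) = L ^ e2 / μ := by ring
    rw [hval] at hG
    filter_upwards [hG.eventually (eventually_gt_nhds hc), h_low (1/2) hhalf] with t hG1 hL1
    exact lt_of_lt_of_le hG1 hL1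
  · intro c hc
    have hcont : Tendsto (fun δ : ℝ => δ ^ (-k) * L ^ e2 / μ) (nhds 1) (nhds (L ^ e2 / μ)) := by
      have h1 : ContinuousAt (fun δ : ℝ => δ ^ (-k)) 1 :=
        Real.continuousAt_rpow_const _ _ (Or.inl one_ne_zero)
      have h2 : ContinuousAt (fun δ : ℝ => δ ^ (-k) * L ^ e2 / μ) 1 :=
        (h1.mul (continuousAt_const (y := L ^ e2))).div_const μ
      simpa [Real.one_rpow] using h2.tendsto
    have hev1 : ∀ᶠ δ in 𝓝 (1:ℝ), δ ^ (-k) * L ^ e2 / μ < c :=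
      hcont.eventually (eventually_lt_nhds hc)
    have hev2 : ∀ᶠ δ in 𝓝 (1:ℝ), (0:ℝ) < δ := eventually_gt_nhds one_pos
    have h3 : ∀ᶠ δ in 𝓝[<] (1:ℝ),
        ((0:ℝ) < δ ∧ δ ^ (-k) * L ^ e2 / μ < c) ∧ δ < 1 :=
      (((hev2.and hev1).filter_mono nhdsWithin_le_nhds).and eventually_mem_nhdsWithin)
    obtain ⟨δ, ⟨hδ0, hδc⟩, hδ1⟩ := h3.exists
    have hδ : δ ∈ Set.Ioo (0:ℝ) 1 := ⟨hδ0, hδ1⟩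
    have hU : Tendsto (fun t : ℝ =>
        (M ^ q * δ) * (t ^ (k + 1) * Real.exp (-μ * ∫ r in (δ * t)..t, b r))
          + (t ^ k * b (δ * t) ^ e2) / μ) atTop
        (nhds ((M ^ q * δ) * 0 + (δ ^ (-k) * L ^ e2) / μ)) :=
      (((hdecay δ hδ).1.const_mul _)).add ((hlim2 δ hδ.1).div_const μ)
    have hval : (M ^ q * δ) * 0 + (δ ^ (-k) * L ^ e2) / μ = δ ^ (-k) * L ^ e2 / μ := by ring
    rw [hval] at hU
    filter_upwards [h_up δ hδ, hU.eventually (eventually_lt_nhds hδc)] with t h1 h2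
    exact lt_of_le_of_lt h1 h2
end

section
/- Let γ ∈ (1/2, 1) and let a : [0,∞) → [0,∞) be a bounded, nonincreasing, measurable function such that lim_{t→∞} t^γ a(t) exists and equals some L > 0. Let p > 2, C₀ > 0, C₁ ≥ 0, and let f : [0,∞) → [0,∞) satisfy, for every t ≥ 0, f(t) ≤ e^{-C₀∫_0^t a(s)ds} · f(0) + C₁ ∫_0^t a(s)^{(p+2)/2} · e^{-C₀∫_s^t a(r)dr} ds. Then there exists a constant C ≥ 0 such that f(t) ≤ C · t^{-pγ/2} for all t ≥ 1; in particular, lim_{t→∞} f(t) = 0. -/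
open MeasureTheory Filter Real

set_option maxHeartbeats 1600000 in
/-- Decay-rate step of Theorem 1: under Assumption 2, if
`f(t) ≤ e^(-C₀∫₀ᵗ a) f(0) + C₁ ∫₀ᵗ a(s)^((p+2)/2) e^(-C₀∫ₛᵗ a) ds` for all `t ≥ 0`,
then `f(t) ≤ C t^(-pγ/2)` for `t ≥ 1` and `f(t) → 0`. -/
theorem decay_rate_bound
    (γ : ℝ) (hγ : γ ∈ Set.Ioo (1/2 : ℝ) 1)
    (a : ℝ → ℝ) (ha_nonneg : ∀ t ≥ (0:ℝ), 0 ≤ a t)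
    (ha_bdd : ∃ M : ℝ, ∀ t ≥ (0:ℝ), a t ≤ M)
    (ha_mono : AntitoneOn a (Set.Ici (0:ℝ)))
    (ha_meas : Measurable a)
    (L : ℝ) (hL : 0 < L)
    (ha_lim : Tendsto (fun t : ℝ => t ^ γ * a t) atTop (nhds L))
    (p : ℝ) (hp : 2 < p) (C₀ : ℝ) (hC₀ : 0 < C₀) (C₁ : ℝ) (hC₁ : 0 ≤ C₁)
    (f : ℝ → ℝ) (hf_nonneg : ∀ t ≥ (0:ℝ), 0 ≤ f t)
    (hf_ineq : ∀ t ≥ (0:ℝ),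
      f t ≤ Real.exp (-C₀ * ∫ s in (0:ℝ)..t, a s) * f 0 +
        C₁ * ∫ s in (0:ℝ)..t, (a s) ^ ((p + 2) / 2) * Real.exp (-C₀ * ∫ r in s..t, a r)) :
    (∃ C : ℝ, 0 ≤ C ∧ ∀ t ≥ (1:ℝ), f t ≤ C * t ^ (-(p * γ / 2))) ∧
      Tendsto f atTop (nhds 0) := by
  obtain ⟨hγ1, hγ2⟩ := hγ
  obtain ⟨M, hM⟩ := ha_bdd
  have hM0 : 0 ≤ M := le_trans (ha_nonneg 0 le_rfl) (hM 0 le_rfl)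
  set q : ℝ := (p + 2) / 2 with hq_def
  have hq0 : 0 ≤ q := by simp only [hq_def]; linarith
  have hf0 : 0 ≤ f 0 := hf_nonneg 0 le_rfl
  -- the modified function A
  set A : ℝ → ℝ := fun s => a (max s 0) with hA_def
  have hA_eq : ∀ s : ℝ, 0 ≤ s → A s = a s := by
    intro s hs; simp only [hA_def, max_eq_left hs]
  have hA_nonneg : ∀ s, 0 ≤ A s := fun s => ha_nonneg _ (le_max_right _ _)
  have hA_le : ∀ s, A s ≤ M := fun s => hM _ (le_max_right _ _)
  have hA_anti : Antitone A := fun s t h =>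
    ha_mono (le_max_right s 0) (le_max_right t 0) (max_le_max h le_rfl)
  have hA_meas : Measurable A := ha_meas.comp (measurable_id.max measurable_const)
  have hA_int : ∀ x y : ℝ, IntervalIntegrable A volume x y := by
    intro x y
    rw [intervalIntegrable_iff]
    refine Integrable.mono' (g := fun _ => M) ?_ hA_meas.aestronglyMeasurable ?_
    · exact integrableOn_const measure_Ioc_lt_top.ne
    · filter_upwards with s
      rw [Real.norm_eq_abs, abs_of_nonneg (hA_nonneg s)]; exact hA_le s
  -- the primitive F
  set F : ℝ → ℝ := fun u => ∫ s in (0:ℝ)..u, A s with hF_def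
  have hF_cont : Continuous F := intervalIntegral.continuous_primitive hA_int 0
  have hF_sub : ∀ s t : ℝ, (∫ r in s..t, A r) = F t - F s := by
    intro s t
    have h := intervalIntegral.integral_add_adjacent_intervals (hA_int 0 s) (hA_int s t)
    simp only [hF_def]; linarith
  have hF_mono : Monotone F := by
    intro s t h
    have h0 : 0 ≤ ∫ r in s..t, A r :=
      intervalIntegral.integral_nonneg h (fun u _ => hA_nonneg u)
    rw [hF_sub] at h0; linarith
  have hF0 : F 0 = 0 := by simp [hF_def]
  have hF_nonneg : ∀ t : ℝ, 0 ≤ t → 0 ≤ F t := by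
    intro t ht; rw [← hF0]; exact hF_mono ht
  have hF_lb : ∀ s t : ℝ, s ≤ t → A t * (t - s) ≤ F t - F s := by
    intro s t hst
    rw [← hF_sub]
    calc A t * (t - s) = ∫ _ in s..t, A t := by
          rw [intervalIntegral.integral_const, smul_eq_mul]; ring
      _ ≤ ∫ r in s..t, A r := by
          apply intervalIntegral.integral_mono_on hst intervalIntegrable_const (hA_int s t)
          intro u hu
          exact hA_anti hu.2
  -- the integrand G
  set G : ℝ → ℝ → ℝ := fun t s => A s ^ q * Real.exp (-C₀ * (F t - F s)) with hG_def
  have hG_meas : ∀ t, Measurable (G t) := by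
    intro t
    exact ((Real.continuous_rpow_const hq0).measurable.comp hA_meas).mul
      ((continuous_const.mul (continuous_const.sub hF_cont)).rexp).measurable
  have hG_nonneg : ∀ t s, 0 ≤ G t s := by
    intro t s
    exact mul_nonneg (Real.rpow_nonneg (hA_nonneg s) q) (Real.exp_pos _).le
  have hG_bd : ∀ t s, s ≤ t → G t s ≤ M ^ q := by
    intro t s hst
    calc G t s ≤ M ^ q * 1 := by
          apply mul_le_mul
          · exact Real.rpow_le_rpow (hA_nonneg s) (hA_le s) hq0
          · rw [Real.exp_le_one_iff]
            have := hF_mono hst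
            nlinarith
          · exact (Real.exp_pos _).le
          · positivity
      _ = M ^ q := mul_one _
  have hG_int : ∀ t x y : ℝ, x ≤ y → y ≤ t → IntervalIntegrable (G t) volume x y := by
    intro t x y hxy hyt
    rw [intervalIntegrable_iff]
    refine Integrable.mono' (g := fun _ => M ^ q) ?_ (hG_meas t).aestronglyMeasurable ?_
    · exact integrableOn_const measure_Ioc_lt_top.ne
    · filter_upwards [ae_restrict_mem measurableSet_Ioc] with s hs
      rw [Set.uIoc_of_le hxy] at hs
      rw [Real.norm_eq_abs, abs_of_nonneg (hG_nonneg t s)]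
      exact hG_bd t s (hs.2.trans hyt)
  -- restated hypothesis
  have hf' : ∀ t : ℝ, 0 ≤ t →
      f t ≤ Real.exp (-C₀ * F t) * f 0 + C₁ * ∫ s in (0:ℝ)..t, G t s := by
    intro t ht
    have h := hf_ineq t ht
    have e1 : (∫ s in (0:ℝ)..t, a s) = F t := by
      apply intervalIntegral.integral_congr
      intro s hs
      rw [Set.uIcc_of_le ht] at hs
      exact (hA_eq s hs.1).symm
    have e2 : (∫ s in (0:ℝ)..t, (a s) ^ ((p + 2) / 2) * Real.exp (-C₀ * ∫ r in s..t, a r))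
        = ∫ s in (0:ℝ)..t, G t s := by
      apply intervalIntegral.integral_congr
      intro s hs
      rw [Set.uIcc_of_le ht] at hs
      have e3 : (∫ r in s..t, a r) = ∫ r in s..t, A r := by
        apply intervalIntegral.integral_congr
        intro r hr
        rw [Set.uIcc_of_le hs.2] at hr
        exact (hA_eq r (hs.1.trans hr.1)).symm
      simp only [hG_def]
      rw [hA_eq s hs.1, e3, hF_sub]
    rw [e1, e2] at h
    exact h
  -- crude bound
  have hcrude : ∀ t : ℝ, 0 ≤ t → f t ≤ f 0 + C₁ * (M ^ q * t) := by
    intro t ht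
    have h := hf' t ht
    have h1 : Real.exp (-C₀ * F t) * f 0 ≤ f 0 := by
      have he : Real.exp (-C₀ * F t) ≤ 1 := by
        rw [Real.exp_le_one_iff]
        have := hF_nonneg t ht
        nlinarith
      nlinarith [Real.exp_pos (-C₀ * F t)]
    have h2 : (∫ s in (0:ℝ)..t, G t s) ≤ M ^ q * t := by
      calc (∫ s in (0:ℝ)..t, G t s) ≤ ∫ _ in (0:ℝ)..t, M ^ q := by
            apply intervalIntegral.integral_mono_on ht (hG_int t 0 t ht le_rfl)
              intervalIntegrable_const
            intro s hs
            exact hG_bd t s hs.2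
        _ = M ^ q * t := by rw [intervalIntegral.integral_const, smul_eq_mul]; ring
    nlinarith
  -- the eventual two-sided bound on a
  obtain ⟨T₀', hT₀'⟩ := eventually_atTop.mp
    ((Metric.tendsto_nhds.mp ha_lim) (L/2) (by linarith))
  set T₀ : ℝ := max T₀' 1 with hT₀_def
  have hT₀1 : (1:ℝ) ≤ T₀ := le_max_right _ _
  have hAlow : ∀ t : ℝ, T₀ ≤ t → L/2 * t ^ (-γ) ≤ A t := by
    intro t ht
    have ht1 : (1:ℝ) ≤ t := hT₀1.trans ht
    have ht0 : (0:ℝ) < t := by linarith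
    have hd := hT₀' t ((le_max_left _ _).trans ht)
    rw [Real.dist_eq, abs_lt] at hd
    have h1 : L/2 ≤ t ^ γ * a t := by linarith
    have hpow : (0:ℝ) < t ^ γ := Real.rpow_pos_of_pos ht0 γ
    have key : t ^ (-γ) * (t ^ γ * a t) = a t := by
      rw [← mul_assoc, ← Real.rpow_add ht0]
      simp
    rw [hA_eq t (by linarith)]
    calc L/2 * t ^ (-γ) = t ^ (-γ) * (L/2) := by ring
      _ ≤ t ^ (-γ) * (t ^ γ * a t) := by
          apply mul_le_mul_of_nonneg_left h1 (Real.rpow_nonneg ht0.le _)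
      _ = a t := key
  have hAup : ∀ t : ℝ, T₀ ≤ t → A t ≤ 2 * L * t ^ (-γ) := by
    intro t ht
    have ht1 : (1:ℝ) ≤ t := hT₀1.trans ht
    have ht0 : (0:ℝ) < t := by linarith
    have hd := hT₀' t ((le_max_left _ _).trans ht)
    rw [Real.dist_eq, abs_lt] at hd
    have h1 : t ^ γ * a t ≤ 2 * L := by linarith
    have key : t ^ (-γ) * (t ^ γ * a t) = a t := by
      rw [← mul_assoc, ← Real.rpow_add ht0]
      simp
    rw [hA_eq t (by linarith)]
    calc a t = t ^ (-γ) * (t ^ γ * a t) := key.symm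
      _ ≤ t ^ (-γ) * (2 * L) := by
          apply mul_le_mul_of_nonneg_left h1 (Real.rpow_nonneg ht0.le _)
      _ = 2 * L * t ^ (-γ) := by ring
  -- constants
  set c : ℝ := C₀ * L / 4 with hc_def
  have hc : 0 < c := by simp only [hc_def]; positivity
  set K : ℝ := (2*L) ^ q * 2 ^ (γ*q) * (2 / (C₀ * L)) with hK_def
  have hK0 : 0 ≤ K := by
    simp only [hK_def]
    have : (0:ℝ) ≤ (2*L) ^ q := Real.rpow_nonneg (by linarith) q
    positivity
  -- the main estimate for t ≥ 2T₀
  have hmain : ∀ t : ℝ, 2 * T₀ ≤ t →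
      f t ≤ (f 0 + C₁ * M ^ q * t) * Real.exp (-c * t ^ (1-γ)) + C₁ * K * t ^ (-(p*γ/2)) := by
    intro t ht2
    have hT₀t : T₀ ≤ t/2 := by linarith
    have ht1 : (1:ℝ) ≤ t/2 := hT₀1.trans hT₀t
    have ht0 : (0:ℝ) < t := by linarith
    have hth : (0:ℝ) ≤ t/2 := by linarith
    have hAt_low : L/2 * t ^ (-γ) ≤ A t := hAlow t (by linarith)
    have hAt_pos : 0 < A t := lt_of_lt_of_le (by positivity) hAt_low
    set k : ℝ := C₀ * A t with hk_def
    have hk : 0 < k := mul_pos hC₀ hAt_pos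
    have hk' : k ≠ 0 := hk.ne'
    -- power identity
    have hpow_id : t ^ (-γ) * t = t ^ (1-γ) := by
      nth_rewrite 2 [show t = t ^ (1:ℝ) from (Real.rpow_one t).symm]
      rw [← Real.rpow_add ht0]
      congr 1
      ring
    -- exponential lower bound on the tail mass of A
    have hFt2 : L/4 * t ^ (1-γ) ≤ F t - F (t/2) := by
      have h1 := hF_lb (t/2) t (by linarith)
      have h3 : L/2 * t ^ (-γ) * (t - t/2) ≤ A t * (t - t/2) :=
        mul_le_mul_of_nonneg_right hAt_low (by linarith)
      have h4 : L/2 * t ^ (-γ) * (t - t/2) = L/4 * (t ^ (-γ) * t) := by ring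
      rw [h4, hpow_id] at h3
      linarith
    have hexp1 : Real.exp (-C₀ * (F t - F (t/2))) ≤ Real.exp (-c * t ^ (1-γ)) := by
      rw [Real.exp_le_exp]
      simp only [hc_def]
      have h2 := mul_le_mul_of_nonneg_left hFt2 hC₀.le
      linarith
    -- split the integral
    have hsplit : (∫ s in (0:ℝ)..t, G t s)
        = (∫ s in (0:ℝ)..(t/2), G t s) + ∫ s in (t/2)..t, G t s :=
      (intervalIntegral.integral_add_adjacent_intervals
        (hG_int t 0 (t/2) hth (by linarith)) (hG_int t (t/2) t (by linarith) le_rfl)).symm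
    -- piece 1
    have hp1 : (∫ s in (0:ℝ)..(t/2), G t s)
        ≤ (t/2) * (M ^ q * Real.exp (-c * t ^ (1-γ))) := by
      calc (∫ s in (0:ℝ)..(t/2), G t s)
          ≤ ∫ _ in (0:ℝ)..(t/2), M ^ q * Real.exp (-C₀ * (F t - F (t/2))) := by
            apply intervalIntegral.integral_mono_on hth
              (hG_int t 0 (t/2) hth (by linarith)) intervalIntegrable_const
            intro s hs
            simp only [hG_def]
            apply mul_le_mul
            · exact Real.rpow_le_rpow (hA_nonneg s) (hA_le s) hq0
            · rw [Real.exp_le_exp]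
              have h2 := mul_le_mul_of_nonneg_left (hF_mono hs.2) hC₀.le
              linarith
            · exact (Real.exp_pos _).le
            · positivity
        _ = (t/2) * (M ^ q * Real.exp (-C₀ * (F t - F (t/2)))) := by
            rw [intervalIntegral.integral_const, smul_eq_mul]; ring
        _ ≤ (t/2) * (M ^ q * Real.exp (-c * t ^ (1-γ))) := by
            apply mul_le_mul_of_nonneg_left _ (by linarith)
            apply mul_le_mul_of_nonneg_left hexp1 (by positivity)
    -- piece 2
    have hAhalf : A (t/2) ≤ 2 * L * (t/2) ^ (-γ) := hAup _ hT₀t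
    have hexpint : ∫ s in (t/2)..t, Real.exp (-(k * (t - s)))
        = (1 - Real.exp (-(k * (t/2)))) / k := by
      have h1 : ∫ s in (t/2)..t, Real.exp (-(k * (t - s)))
          = ∫ u in (t - t)..(t - t/2), Real.exp (-(k * u)) :=
        intervalIntegral.integral_comp_sub_left (fun u => Real.exp (-(k * u))) t
      rw [h1]
      have h2 : ∀ u : ℝ, Real.exp (-(k*u)) = Real.exp ((-k) * u) := by intro u; ring_nf
      simp only [h2]
      rw [intervalIntegral.integral_comp_mul_left (fun x => Real.exp x) (by linarith : -k ≠ 0)]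
      rw [integral_exp, smul_eq_mul, show t - t = 0 by ring]
      rw [show (-k) * 0 = 0 by ring, Real.exp_zero]
      rw [show (-k) * (t - t/2) = -(k * (t/2)) by ring]
      simp only [neg_mul, inv_neg]
      field_simp
      ring
    have hcont_int : IntervalIntegrable
        (fun u => A (t/2) ^ q * Real.exp (-(k * (t - u)))) volume (t/2) t := by
      apply Continuous.intervalIntegrable
      exact continuous_const.mul (Real.continuous_exp.comp
        ((continuous_const.mul (continuous_const.sub continuous_id)).neg))
    have hp2a : (∫ s in (t/2)..t, G t s)
        ≤ A (t/2) ^ q * ((1 - Real.exp (-(k * (t/2)))) / k) := by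
      calc (∫ s in (t/2)..t, G t s)
          ≤ ∫ s in (t/2)..t, A (t/2) ^ q * Real.exp (-(k * (t - s))) := by
            apply intervalIntegral.integral_mono_on (by linarith)
              (hG_int t (t/2) t (by linarith) le_rfl) hcont_int
            · intro s hs
              simp only [hG_def]
              apply mul_le_mul
              · exact Real.rpow_le_rpow (hA_nonneg s) (hA_anti hs.1) hq0
              · rw [Real.exp_le_exp]
                have hlb := hF_lb s t hs.2
                simp only [hk_def]
                have h2 := mul_le_mul_of_nonneg_left hlb hC₀.le
                linarith
              · exact (Real.exp_pos _).le
              · exact Real.rpow_nonneg (hA_nonneg _) q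
        _ = A (t/2) ^ q * ((1 - Real.exp (-(k * (t/2)))) / k) := by
            rw [intervalIntegral.integral_const_mul, hexpint]
    have h1k : (1 - Real.exp (-(k * (t/2)))) / k ≤ 1 / k := by
      gcongr
      · linarith [Real.exp_pos (-(k * (t/2)))]
    have h2k : 1 / k ≤ 2 / (C₀ * L) * t ^ γ := by
      have hpr : t ^ γ * t ^ (-γ) = 1 := by
        rw [← Real.rpow_add ht0]; simp
      have e1 : (2 / (C₀*L) * t ^ γ) * (C₀ * (L/2 * t ^ (-γ))) = 1 := by
        have : (2 / (C₀*L) * t ^ γ) * (C₀ * (L/2 * t ^ (-γ)))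
            = (t ^ γ * t ^ (-γ)) * ((C₀ * L) / (C₀ * L)) := by ring
        rw [this, hpr, one_mul, div_self (by positivity : (C₀:ℝ) * L ≠ 0)]
      have hk_ge : C₀ * (L/2 * t ^ (-γ)) ≤ k := by
        simp only [hk_def]
        exact mul_le_mul_of_nonneg_left hAt_low hC₀.le
      have hDpos : (0:ℝ) ≤ 2 / (C₀*L) * t ^ γ := by positivity
      rw [div_le_iff₀ hk]
      have h4 := mul_le_mul_of_nonneg_left hk_ge hDpos
      linarith
    have h3 : A (t/2) ^ q ≤ (2*L) ^ q * 2 ^ (γ*q) * t ^ (-(γ*q)) := by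
      calc A (t/2) ^ q ≤ (2*L*(t/2) ^ (-γ)) ^ q :=
            Real.rpow_le_rpow (hA_nonneg _) hAhalf hq0
        _ = (2*L) ^ q * ((t/2) ^ (-γ)) ^ q :=
            Real.mul_rpow (by linarith) (Real.rpow_nonneg (by linarith) _)
        _ = (2*L) ^ q * (t/2) ^ (-γ*q) := by
            rw [← Real.rpow_mul (by linarith : (0:ℝ) ≤ t/2)]
        _ = (2*L) ^ q * (t ^ (-γ*q) * ((2:ℝ)⁻¹) ^ (-γ*q)) := by
            rw [show t/2 = t * (2:ℝ)⁻¹ by ring,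
              Real.mul_rpow ht0.le (by norm_num : (0:ℝ) ≤ (2:ℝ)⁻¹)]
        _ = (2*L) ^ q * 2 ^ (γ*q) * t ^ (-(γ*q)) := by
            rw [Real.inv_rpow (by norm_num : (0:ℝ) ≤ (2:ℝ)), ← Real.rpow_neg (by norm_num)]
            ring_nf
    have hp2 : (∫ s in (t/2)..t, G t s) ≤ K * t ^ (-(p*γ/2)) := by
      have hnn1 : (0:ℝ) ≤ A (t/2) ^ q := Real.rpow_nonneg (hA_nonneg _) q
      have hnn2 : (0:ℝ) ≤ (2*L) ^ q * 2 ^ (γ*q) * t ^ (-(γ*q)) := by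
        have : (0:ℝ) ≤ (2*L) ^ q := Real.rpow_nonneg (by linarith) q
        positivity
      have step : A (t/2) ^ q * ((1 - Real.exp (-(k * (t/2)))) / k)
          ≤ ((2*L) ^ q * 2 ^ (γ*q) * t ^ (-(γ*q))) * (2 / (C₀ * L) * t ^ γ) := by
        refine mul_le_mul h3 (h1k.trans h2k) ?_ hnn2
        apply div_nonneg _ hk.le
        have hx : Real.exp (-(k * (t/2))) ≤ 1 := by
          rw [Real.exp_le_one_iff]
          linarith [mul_nonneg hk.le hth]
        linarith
      have efin : ((2*L) ^ q * 2 ^ (γ*q) * t ^ (-(γ*q))) * (2 / (C₀ * L) * t ^ γ)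
          = K * t ^ (-(p*γ/2)) := by
        have e2 : t ^ (-(γ*q)) * t ^ γ = t ^ (-(p*γ/2)) := by
          rw [← Real.rpow_add ht0]
          congr 1
          simp only [hq_def]; ring
        calc ((2*L) ^ q * 2 ^ (γ*q) * t ^ (-(γ*q))) * (2 / (C₀ * L) * t ^ γ)
            = ((2*L) ^ q * 2 ^ (γ*q) * (2 / (C₀ * L))) * (t ^ (-(γ*q)) * t ^ γ) := by ring
          _ = K * t ^ (-(p*γ/2)) := by rw [e2]
      exact hp2a.trans (step.trans_eq efin)
    -- combine
    have h := hf' t ht0.le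
    rw [hsplit] at h
    have hE0 : Real.exp (-C₀ * F t) ≤ Real.exp (-c * t ^ (1-γ)) := by
      rw [Real.exp_le_exp]
      have hFhalf : 0 ≤ F (t/2) := hF_nonneg _ hth
      simp only [hc_def]
      have h2 := mul_le_mul_of_nonneg_left hFt2 hC₀.le
      have h3 := mul_le_mul_of_nonneg_left hFhalf hC₀.le
      linarith
    have hEpos : (0:ℝ) < Real.exp (-c * t ^ (1-γ)) := Real.exp_pos _
    have hMq : (0:ℝ) ≤ M ^ q := Real.rpow_nonneg hM0 q
    have htp : (0:ℝ) ≤ t ^ (-(p*γ/2)) := Real.rpow_nonneg ht0.le _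
    have s1 : Real.exp (-C₀ * F t) * f 0 ≤ Real.exp (-c * t ^ (1-γ)) * f 0 :=
      mul_le_mul_of_nonneg_right hE0 hf0
    have s2 := add_le_add hp1 hp2
    have s3 := mul_le_mul_of_nonneg_left s2 hC₁
    have hint0 : 0 ≤ C₁ * (M ^ q * (Real.exp (-c * t ^ (1-γ)) * t)) := by positivity
    linarith
    -- asymptotic absorption of the exponential term
  set δ : ℝ := 1 - γ with hδ_def
  have hδ : 0 < δ := by simp only [hδ_def]; linarith
  set β : ℝ := 1 + p * γ / 2 with hβ_def
  have hten : Tendsto (fun t : ℝ => t ^ β * Real.exp (-c * t ^ δ)) atTop (nhds 0) := by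
    have h1 := tendsto_rpow_mul_exp_neg_mul_atTop_nhds_zero (β/δ) c hc
    have h2 : Tendsto (fun t : ℝ => t ^ δ) atTop atTop := tendsto_rpow_atTop hδ
    have h3 := h1.comp h2
    apply h3.congr'
    filter_upwards [eventually_ge_atTop (0:ℝ)] with t ht
    simp only [Function.comp_apply]
    rw [← Real.rpow_mul ht, mul_div_cancel₀ _ hδ.ne']
  have hev : ∀ᶠ t in atTop,
      (f 0 + C₁ * M ^ q) * (t ^ β * Real.exp (-c * t ^ δ)) < 1 := by
    have h4 : Tendsto (fun t : ℝ => (f 0 + C₁ * M ^ q) * (t ^ β * Real.exp (-c * t ^ δ)))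
        atTop (nhds ((f 0 + C₁ * M ^ q) * 0)) := hten.const_mul _
    rw [mul_zero] at h4
    exact h4.eventually_lt_const one_pos
  obtain ⟨T₁, hT₁⟩ := eventually_atTop.mp hev
  set T : ℝ := max T₁ (2 * T₀) with hT_def
  have hT1 : (1:ℝ) ≤ T := by
    have : (1:ℝ) ≤ 2 * T₀ := by linarith
    exact this.trans (le_max_right _ _)
  have hTpos : (0:ℝ) < T := by linarith
  have hMq : (0:ℝ) ≤ M ^ q := Real.rpow_nonneg hM0 q
  -- bound for large t
  have hbig : ∀ t : ℝ, T ≤ t → f t ≤ (1 + C₁ * K) * t ^ (-(p*γ/2)) := by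
    intro t ht
    have ht1 : (1:ℝ) ≤ t := hT1.trans ht
    have ht0 : (0:ℝ) < t := by linarith
    have htp : (0:ℝ) ≤ t ^ (-(p*γ/2)) := Real.rpow_nonneg ht0.le _
    have h := hmain t ((le_max_right _ _).trans ht)
    have hsm := (hT₁ t ((le_max_left _ _).trans ht)).le
    have e1 : f 0 + C₁ * M ^ q * t ≤ (f 0 + C₁ * M ^ q) * t := by
      have : f 0 * 1 ≤ f 0 * t := mul_le_mul_of_nonneg_left ht1 hf0
      nlinarith
    have e2 : t = t ^ β * t ^ (-(p*γ/2)) := by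
      rw [← Real.rpow_add ht0, show β + -(p*γ/2) = 1 by simp only [hβ_def]; ring,
        Real.rpow_one]
    have h1 : (f 0 + C₁ * M ^ q * t) * Real.exp (-c * t ^ δ) ≤ t ^ (-(p*γ/2)) := by
      calc (f 0 + C₁ * M ^ q * t) * Real.exp (-c * t ^ δ)
          ≤ ((f 0 + C₁ * M ^ q) * t) * Real.exp (-c * t ^ δ) :=
            mul_le_mul_of_nonneg_right e1 (Real.exp_pos _).le
        _ = ((f 0 + C₁ * M ^ q) * (t ^ β * Real.exp (-c * t ^ δ))) * t ^ (-(p*γ/2)) := by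
            nth_rewrite 1 [e2]; ring
        _ ≤ 1 * t ^ (-(p*γ/2)) := mul_le_mul_of_nonneg_right hsm htp
        _ = t ^ (-(p*γ/2)) := one_mul _
    linarith
  -- the final constant
  set C : ℝ := (f 0 + C₁ * M ^ q * T) * T ^ (p*γ/2) + (1 + C₁ * K) with hC_def
  have hTp : (0:ℝ) ≤ T ^ (p*γ/2) := Real.rpow_nonneg hTpos.le _
  have hTsum : 0 ≤ f 0 + C₁ * M ^ q * T :=
    add_nonneg hf0 (mul_nonneg (mul_nonneg hC₁ hMq) hTpos.le)
  have hCK : 0 ≤ 1 + C₁ * K := by linarith [mul_nonneg hC₁ hK0]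
  have hC0 : 0 ≤ C := by
    have h2 : 0 ≤ (f 0 + C₁ * M ^ q * T) * T ^ (p*γ/2) := mul_nonneg hTsum hTp
    simp only [hC_def]
    linarith
  have hfinal : ∀ t : ℝ, 1 ≤ t → f t ≤ C * t ^ (-(p*γ/2)) := by
    intro t ht1
    have ht0 : (0:ℝ) < t := by linarith
    have htp : (0:ℝ) ≤ t ^ (-(p*γ/2)) := Real.rpow_nonneg ht0.le _
    rcases le_total T t with hcase | hcase
    · have h := hbig t hcase
      have h2 : (1 + C₁ * K) * t ^ (-(p*γ/2)) ≤ C * t ^ (-(p*γ/2)) := by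
        apply mul_le_mul_of_nonneg_right _ htp
        have h3 : 0 ≤ (f 0 + C₁ * M ^ q * T) * T ^ (p*γ/2) := mul_nonneg hTsum hTp
        simp only [hC_def]
        linarith
      linarith
    · have h := hcrude t (by linarith)
      have e1 : f 0 + C₁ * (M ^ q * t) ≤ f 0 + C₁ * M ^ q * T := by
        have : C₁ * (M ^ q * t) ≤ C₁ * (M ^ q * T) := by
          apply mul_le_mul_of_nonneg_left _ hC₁
          exact mul_le_mul_of_nonneg_left hcase hMq
        linarith
      have e2 : (1:ℝ) ≤ T ^ (p*γ/2) * t ^ (-(p*γ/2)) := by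
        have h4 : T ^ (-(p*γ/2)) ≤ t ^ (-(p*γ/2)) :=
          Real.rpow_le_rpow_of_nonpos ht0 hcase (by nlinarith)
        have h5 : T ^ (p*γ/2) * T ^ (-(p*γ/2)) = 1 := by
          rw [← Real.rpow_add hTpos]; simp
        calc (1:ℝ) = T ^ (p*γ/2) * T ^ (-(p*γ/2)) := h5.symm
          _ ≤ T ^ (p*γ/2) * t ^ (-(p*γ/2)) := mul_le_mul_of_nonneg_left h4 hTp
      have h6 : 0 ≤ f 0 + C₁ * M ^ q * T := hTsum
      calc f t ≤ f 0 + C₁ * M ^ q * T := by linarith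
        _ = (f 0 + C₁ * M ^ q * T) * 1 := (mul_one _).symm
        _ ≤ (f 0 + C₁ * M ^ q * T) * (T ^ (p*γ/2) * t ^ (-(p*γ/2))) :=
            mul_le_mul_of_nonneg_left e2 h6
        _ = ((f 0 + C₁ * M ^ q * T) * T ^ (p*γ/2)) * t ^ (-(p*γ/2)) := by ring
        _ ≤ C * t ^ (-(p*γ/2)) := by
            apply mul_le_mul_of_nonneg_right _ htp
            simp only [hC_def]
            linarith
  refine ⟨⟨C, hC0, fun t ht => hfinal t ht⟩, ?_⟩
  -- convergence to zero
  have hzero : Tendsto (fun t : ℝ => C * t ^ (-(p*γ/2))) atTop (nhds 0) := by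
    have h1 : Tendsto (fun t : ℝ => t ^ (-(p*γ/2))) atTop (nhds 0) :=
      tendsto_rpow_neg_atTop (by nlinarith)
    have h2 := h1.const_mul C
    rw [mul_zero] at h2
    exact h2
  apply squeeze_zero' ?_ ?_ hzero
  · filter_upwards [eventually_ge_atTop (0:ℝ)] with t ht
    exact hf_nonneg t ht
  · filter_upwards [eventually_ge_atTop (1:ℝ)] with t ht
    exact hfinal t ht
end
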